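/- Suppose a hierarchical family of partitions {P_t} of X and a sorted sequence of pairs e_1,...,e_k with d(e_1) ≤ ... ≤ d(e_k) satisfy |E_t Δ E(P_t)| ≤ 4|B(G_t)| for all t, where E_t = {e_1,...,e_t}, G_t = (X, E_t), and E(P_t) is the set of within-cluster pairs of P_t. Define d_U(x,y) = d(e_j) for j the minimal t at which x,y lie in the same cluster of P_t. Then ||d - d_U||_1 = ∫_0^∞ |E_s Δ E(P_s)| ds ≤ 4 ∫_0^∞ |B(G_s)| ds = 4 Σ_{triples} tp(d;x,y,z), where E_s = E_t and P_s = P_t for d(e_t) ≤ s < d(e_{t+1}). -/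

import Mathlib

noncomputable section

open MeasureTheory
open scoped Classical

variable {X : Type*} [Fintype X] [DecidableEq X] {k : ℕ}

/-- One term of the three point condition. -/
def tpt (d : X → X → ℝ) (x y z : X) : ℝ := d x z - max (d x y) (d y z)

/-- Three point condition: max over all permutations of `x,y,z`. -/
def tp (d : X → X → ℝ) (x y z : X) : ℝ :=
  max (max (max (tpt d x y z) (tpt d x z y)) (max (tpt d y x z) (tpt d y z x)))
      (max (tpt d z x y) (tpt d z y x))

/-- `(x,y) ∈ E_t = {e_1, …, e_t}` (0-based: the first `t` edges of the enumeration `e`). -/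
def inE (e : Fin k → X × X) (t : ℕ) (x y : X) : Prop :=
  ∃ i : Fin k, (i : ℕ) < t ∧ (e i = (x, y) ∨ e i = (y, x))

/-- Number of ordered pairs in the symmetric difference `E_t Δ E(P)` for a partition given
as the relation `P` (each unordered pair is counted twice). -/
def disCard (e : Fin k → X × X) (P : X → X → Prop) (t : ℕ) : ℕ :=
  (Finset.univ.filter (fun p : X × X => p.1 ≠ p.2 ∧
    ((inE e t p.1 p.2 ∧ ¬ P p.1 p.2) ∨ (¬ inE e t p.1 p.2 ∧ P p.1 p.2)))).card

/-- Number of ordered bad triangles of `G_t = (X, E_t)` (each unordered one counted 6 times). -/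
def badCardE (e : Fin k → X × X) (t : ℕ) : ℕ :=
  (Finset.univ.filter (fun p : X × X × X =>
    p.1 ≠ p.2.1 ∧ p.2.1 ≠ p.2.2 ∧ p.1 ≠ p.2.2 ∧
    ((if inE e t p.1 p.2.1 then 1 else 0) + (if inE e t p.2.1 p.2.2 then 1 else 0) +
      (if inE e t p.2.2 p.1 then 1 else 0) = (2 : ℕ)))).card

/-- Number of ordered bad triangles of the `s`-neighbor graph `G_s`. -/
def badCard (d : X → X → ℝ) (s : ℝ) : ℕ :=
  (Finset.univ.filter (fun p : X × X × X =>
    p.1 ≠ p.2.1 ∧ p.2.1 ≠ p.2.2 ∧ p.1 ≠ p.2.2 ∧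
    ((if d p.1 p.2.1 ≤ s then 1 else 0) + (if d p.2.1 p.2.2 ≤ s then 1 else 0) +
      (if d p.2.2 p.1 ≤ s then 1 else 0) = (2 : ℕ)))).card

/-- The step index `t(s)`: the number of edges `e_i` with `d(e_i) ≤ s`, so that
`E_s = E_{t(s)}` and `P_s = P_{t(s)}` when the enumeration is sorted by distance. -/
def tIdx (d : X → X → ℝ) (e : Fin k → X × X) (s : ℝ) : Fin (k + 1) :=
  ⟨(Finset.univ.filter (fun i : Fin k => d (e i).1 (e i).2 ≤ s)).card,
    Nat.lt_succ_of_le (le_trans (Finset.card_filter_le _ _) (by simp))⟩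

lemma pairI (a b s : ℝ) :
    ((a ≤ s ∧ ¬ b ≤ s) ∨ (¬ a ≤ s ∧ b ≤ s)) ↔ (min a b ≤ s ∧ s < max a b) := by
  by_cases h1 : a ≤ s <;> by_cases h2 : b ≤ s <;>
    simp_all [min_le_iff, lt_max_iff, not_le]

lemma tri (a b c s : ℝ) :
    ((if a ≤ s then 1 else 0) + (if b ≤ s then 1 else 0) + (if c ≤ s then 1 else 0) = (2:ℕ)) ↔
      (max (min a b) (max (min a c) (min b c)) ≤ s ∧ s < max a (max b c)) := by
  split_ifs <;> simp_all [max_le_iff, le_max_iff, min_le_iff, lt_max_iff, not_le]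

set_option maxHeartbeats 1000000 in
lemma tpval (a b c : ℝ) :
    max (max (max (c - max a b) (a - max c b)) (max (b - max a c) (a - max b c)))
      (max (b - max c a) (c - max b a)) =
    max a (max b c) - max (min a b) (max (min a c) (min b c)) := by
  rcases le_total a b with h1|h1 <;> rcases le_total b c with h2|h2 <;>
    rcases le_total a c with h3|h3 <;>
    simp [*, min_eq_left, min_eq_right, max_eq_left, max_eq_right] <;>
    simp only [max_def] <;> split_ifs <;> linarith

lemma intgIco (a b : ℝ) : IntegrableOn ((Set.Ico a b).indicator (fun _ => (1:ℝ))) (Set.Ioi 0) := by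
  refine Integrable.integrableOn ?_
  rw [integrable_indicator_iff measurableSet_Ico]
  exact integrableOn_const measure_Ico_lt_top.ne

lemma intIco (a b : ℝ) (ha : 0 ≤ a) (hab : a ≤ b) :
    ∫ s in Set.Ioi (0:ℝ), (Set.Ico a b).indicator (fun _ => (1:ℝ)) s = b - a := by
  rw [setIntegral_indicator measurableSet_Ico, setIntegral_const]
  have hv : volume (Set.Ioi (0:ℝ) ∩ Set.Ico a b) = ENNReal.ofReal (b - a) := by
    refine le_antisymm (le_trans (measure_mono Set.inter_subset_right) (le_of_eq Real.volume_Ico)) ?_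
    refine le_trans (le_of_eq Real.volume_Ioo.symm) (measure_mono ?_)
    intro s hs
    exact ⟨lt_of_le_of_lt ha hs.1, hs.1.le, hs.2⟩
  rw [Measure.real, hv, ENNReal.toReal_ofReal (by linarith), smul_eq_mul, mul_one]

/-- If a hierarchical family of partitions `{P_t}` over the sorted pair sequence `e` satisfies
`|E_t Δ E(P_t)| ≤ 4 |B(G_t)|` for all `t`, then the ultrametric `d_U` read off from the
merging times satisfies
`‖d - d_U‖₁ = ∫_0^∞ |E_s Δ E(P_s)| ds ≤ 4 ∫_0^∞ |B(G_s)| ds = 4 Σ_{triples} tp(d;x,y,z)`.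
(Pairs are counted as ordered pairs — a factor 2 on both sides of the equalities — and
triangles as ordered triples — a factor 6 — whence the coefficients `3 ⬝ ≤ 4 ⬝`.) -/
theorem hcc_ultrafit_l1_bound
    (d : X → X → ℝ) (hsym : ∀ x y, d x y = d y x) (hnn : ∀ x y, 0 ≤ d x y)
    (hdiag : ∀ x, d x x = 0)
    (e : Fin k → X × X) (hnedge : ∀ i, (e i).1 ≠ (e i).2)
    (henum : ∀ x y : X, x ≠ y → ∃! i : Fin k, e i = (x, y) ∨ e i = (y, x))
    (hsorted : ∀ i j : Fin k, i ≤ j → d (e i).1 (e i).2 ≤ d (e j).1 (e j).2)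
    (P : Fin (k + 1) → X → X → Prop)
    (hequiv : ∀ t, Equivalence (P t))
    (hzero : ∀ x y, P 0 x y ↔ x = y)
    (hhier : ∀ t : Fin k, ∀ x y, P t.castSucc x y → P t.succ x y)
    (hlast : ∀ x y, P (Fin.last k) x y)
    (hdis : ∀ t : Fin (k + 1), 3 * disCard e (P t) (t : ℕ) ≤ 4 * badCardE e (t : ℕ))
    (dU : X → X → ℝ) (hdUdiag : ∀ x, dU x x = 0)
    (hdU : ∀ x y, x ≠ y → ∀ i : Fin k,
      P i.succ x y → ¬ P i.castSucc x y → dU x y = d (e i).1 (e i).2) :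
    ((∑ x : X, ∑ y : X, |d x y - dU x y|) =
        ∫ s in Set.Ioi (0 : ℝ), (disCard e (P (tIdx d e s)) ((tIdx d e s : ℕ)) : ℝ)) ∧
    (3 * ∫ s in Set.Ioi (0 : ℝ), (disCard e (P (tIdx d e s)) ((tIdx d e s : ℕ)) : ℝ)) ≤
        4 * ∫ s in Set.Ioi (0 : ℝ), (badCard d s : ℝ) ∧
    ((∫ s in Set.Ioi (0 : ℝ), (badCard d s : ℝ)) =
        ∑ x : X, ∑ y : X, ∑ z : X, if x ≠ y ∧ y ≠ z ∧ x ≠ z then tp d x y z else 0) := by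
  -- index lemma
  have hidx : ∀ (s : ℝ) (j : Fin k), d (e j).1 (e j).2 ≤ s ↔ (j : ℕ) < ((tIdx d e s : Fin (k+1)) : ℕ) := by
    intro s j
    constructor
    · intro h
      have hsub : Finset.Iic j ⊆ Finset.univ.filter (fun i : Fin k => d (e i).1 (e i).2 ≤ s) := by
        intro i hi
        simp only [Finset.mem_Iic] at hi
        simp only [Finset.mem_filter, Finset.mem_univ, true_and]
        exact le_trans (hsorted i j hi) h
      have hc := Finset.card_le_card hsub
      rw [Fin.card_Iic] at hc
      simpa [tIdx] using lt_of_lt_of_le (Nat.lt_succ_self (j:ℕ)) hc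
    · intro h
      by_contra hc
      have hsub : Finset.univ.filter (fun i : Fin k => d (e i).1 (e i).2 ≤ s) ⊆ Finset.Iio j := by
        intro i hi
        simp only [Finset.mem_filter, Finset.mem_univ, true_and] at hi
        simp only [Finset.mem_Iio]
        by_contra hij
        push_neg at hij
        exact hc (le_trans (hsorted j i hij) hi)
      have hcard := Finset.card_le_card hsub
      rw [Fin.card_Iio] at hcard
      simp only [tIdx] at h
      omega
  -- edge membership lemma
  have hinE : ∀ (s : ℝ) (x y : X), x ≠ y → (inE e ((tIdx d e s : ℕ)) x y ↔ d x y ≤ s) := by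
    intro s x y hxy
    obtain ⟨i, hi, -⟩ := henum x y hxy
    constructor
    · rintro ⟨i', hi', h'⟩
      have hd : d x y = d (e i').1 (e i').2 := by
        rcases h' with h'|h' <;> rw [h'] <;> simp [hsym x y]
      rw [hd]
      exact (hidx s i').mpr hi'
    · intro h
      refine ⟨i, ?_, hi⟩
      have hd : d (e i).1 (e i).2 = d x y := by
        rcases hi with h'|h' <;> rw [h'] <;> simp [hsym x y]
      exact (hidx s i).mp (by rw [hd]; exact h)
  -- monotonicity of P
  have hPmono : ∀ (x y : X) (t t' : Fin (k+1)), t ≤ t' → P t x y → P t' x y := by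
    intro x y t t' htt' h
    revert htt'
    induction t' using Fin.induction with
    | zero => intro htt'; exact (le_antisymm htt' (Fin.zero_le t)) ▸ h
    | succ i ih =>
      intro htt'
      rcases eq_or_lt_of_le htt' with he|hl
      · exact he ▸ h
      · refine hhier i x y (ih ?_)
        have h1 : (t : ℕ) < (i.succ : ℕ) := hl
        simp only [Fin.le_def, Fin.coe_castSucc]
        simp only [Fin.val_succ] at h1
        omega
  -- merging index
  have hmerge : ∀ x y : X, x ≠ y → ∃ i : Fin k, P i.succ x y ∧ ¬ P i.castSucc x y ∧
      (∀ t : Fin (k+1), P t x y ↔ i.succ ≤ t) := by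
    intro x y hxy
    set S := Finset.univ.filter (fun t : Fin (k+1) => P t x y) with hSdef
    have hne : S.Nonempty := ⟨Fin.last k, by simp [hSdef, hlast]⟩
    set m := S.min' hne with hm
    have hmS : m ∈ S := S.min'_mem hne
    have hPm : P m x y := (Finset.mem_filter.1 hmS).2
    have hmv : 0 < (m : ℕ) := by
      rcases Nat.eq_zero_or_pos (m : ℕ) with h0|h0
      · exfalso
        have : m = 0 := Fin.ext (by simp [h0])
        rw [this] at hPm
        exact hxy ((hzero x y).1 hPm)
      · exact h0
    have hmk : (m : ℕ) - 1 < k := by have := m.isLt; omega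
    refine ⟨⟨(m:ℕ) - 1, hmk⟩, ?_, ?_, ?_⟩
    · have hsuccm : (⟨(m:ℕ)-1, hmk⟩ : Fin k).succ = m := Fin.ext (by simp; omega)
      rw [hsuccm]; exact hPm
    · intro hcp
      have hmem : (⟨(m:ℕ)-1, hmk⟩ : Fin k).castSucc ∈ S := by
        simp only [hSdef, Finset.mem_filter, Finset.mem_univ, true_and]
        exact hcp
      have := S.min'_le _ hmem
      rw [← hm] at this
      have hlt : ((⟨(m:ℕ)-1, hmk⟩ : Fin k).castSucc : ℕ) < (m : ℕ) := by show (m:ℕ) - 1 < m; omega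
      have := Fin.le_def.1 this
      omega
    · intro t
      constructor
      · intro ht
        have hmt : m ≤ t := S.min'_le t (by simp [hSdef, ht])
        have hsuccm : (⟨(m:ℕ)-1, hmk⟩ : Fin k).succ = m := Fin.ext (by simp; omega)
        rw [hsuccm]; exact hmt
      · intro ht
        refine hPmono x y m t ?_ hPm
        have hsuccm : (⟨(m:ℕ)-1, hmk⟩ : Fin k).succ = m := Fin.ext (by simp; omega)
        rw [← hsuccm]; exact ht
  -- cluster membership lemma
  have hPiff : ∀ (x y : X), x ≠ y → ∀ s : ℝ, (P (tIdx d e s) x y ↔ dU x y ≤ s) := by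
    intro x y hxy s
    obtain ⟨i, hPs, hPc, hiff⟩ := hmerge x y hxy
    have hdu : dU x y = d (e i).1 (e i).2 := hdU x y hxy i hPs hPc
    rw [hdu, hiff, Fin.le_def, Fin.val_succ]
    rw [hidx s i]
    omega
  have hdUnn : ∀ x y : X, 0 ≤ dU x y := by
    intro x y
    by_cases hxy : x = y
    · rw [hxy, hdUdiag]
    · obtain ⟨i, hPs, hPc, -⟩ := hmerge x y hxy
      rw [hdU x y hxy i hPs hPc]
      exact hnn _ _
  -- the pair indicator function
  set F : X × X → ℝ → ℝ := fun p s =>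
    (Set.Ico (min (d p.1 p.2) (dU p.1 p.2)) (max (d p.1 p.2) (dU p.1 p.2))).indicator
      (fun _ => (1:ℝ)) s with hF
  have hdisEq : ∀ s : ℝ,
      ((disCard e (P (tIdx d e s)) ((tIdx d e s : ℕ))) : ℝ) = ∑ p : X × X, F p s := by
    intro s
    rw [disCard, Finset.card_filter]
    push_cast
    refine Finset.sum_congr rfl ?_
    intro p _
    by_cases hp : p.1 = p.2
    · simp [hF, hp, hdiag, hdUdiag, Set.Ico_self]
    · simp only [hF, Set.indicator_apply, Set.mem_Ico]
      refine if_congr ?_ rfl rfl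
      simp only [ne_eq, hp, not_false_eq_true, true_and, hinE s p.1 p.2 hp,
        hPiff p.1 p.2 hp s]
      exact pairI _ _ s
  have hFint : ∀ p : X × X, IntegrableOn (F p) (Set.Ioi (0:ℝ)) := fun p => intgIco _ _
  have hFval : ∀ p : X × X, ∫ s in Set.Ioi (0:ℝ), F p s = |d p.1 p.2 - dU p.1 p.2| := by
    intro p
    rw [hF]
    rw [intIco _ _ (le_min (hnn _ _) (hdUnn _ _)) min_le_max]
    rw [max_sub_min_eq_abs, abs_sub_comm]
  have hfsum : (fun s => ((disCard e (P (tIdx d e s)) ((tIdx d e s : ℕ))) : ℝ)) =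
      fun s => ∑ p : X × X, F p s := funext hdisEq
  have hfInt : IntegrableOn
      (fun s => ((disCard e (P (tIdx d e s)) ((tIdx d e s : ℕ))) : ℝ)) (Set.Ioi (0:ℝ)) := by
    rw [hfsum]
    exact integrable_finset_sum _ (fun p _ => hFint p)
  have hpart1 : (∑ x : X, ∑ y : X, |d x y - dU x y|) =
      ∫ s in Set.Ioi (0 : ℝ), (disCard e (P (tIdx d e s)) ((tIdx d e s : ℕ)) : ℝ) := by
    rw [show (∫ s in Set.Ioi (0 : ℝ), (disCard e (P (tIdx d e s)) ((tIdx d e s : ℕ)) : ℝ)) =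
        ∫ s in Set.Ioi (0 : ℝ), ∑ p : X × X, F p s from by rw [← hfsum]]
    rw [integral_finset_sum _ (fun p _ => hFint p)]
    rw [Fintype.sum_prod_type]
    refine Finset.sum_congr rfl fun x _ => Finset.sum_congr rfl fun y _ => ?_
    exact (hFval (x, y)).symm
  -- triple indicator function
  set G : X × X × X → ℝ → ℝ := fun p s =>
    if p.1 ≠ p.2.1 ∧ p.2.1 ≠ p.2.2 ∧ p.1 ≠ p.2.2 then
      (Set.Ico
        (max (min (d p.1 p.2.1) (d p.2.1 p.2.2))
          (max (min (d p.1 p.2.1) (d p.2.2 p.1)) (min (d p.2.1 p.2.2) (d p.2.2 p.1))))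
        (max (d p.1 p.2.1) (max (d p.2.1 p.2.2) (d p.2.2 p.1)))).indicator (fun _ => (1:ℝ)) s
    else 0 with hG
  have hbadEq : ∀ s : ℝ, ((badCard d s : ℕ) : ℝ) = ∑ p : X × X × X, G p s := by
    intro s
    rw [badCard, Finset.card_filter]
    push_cast
    refine Finset.sum_congr rfl ?_
    intro p _
    by_cases hp : p.1 ≠ p.2.1 ∧ p.2.1 ≠ p.2.2 ∧ p.1 ≠ p.2.2
    · simp only [hG, hp.1, hp.2.1, hp.2.2, ne_eq, not_false_eq_true, and_self, if_true,
        true_and, Set.indicator_apply, Set.mem_Ico]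
      exact if_congr (tri _ _ _ s) rfl rfl
    · simp only [hG, hp, if_false]
      rw [if_neg (fun h => hp ⟨h.1, h.2.1, h.2.2.1⟩)]
  have hGint : ∀ p : X × X × X, IntegrableOn (G p) (Set.Ioi (0:ℝ)) := by
    intro p
    rw [hG]
    by_cases hp : p.1 ≠ p.2.1 ∧ p.2.1 ≠ p.2.2 ∧ p.1 ≠ p.2.2
    · simpa [hp] using intgIco
        (max (min (d p.1 p.2.1) (d p.2.1 p.2.2))
          (max (min (d p.1 p.2.1) (d p.2.2 p.1)) (min (d p.2.1 p.2.2) (d p.2.2 p.1))))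
        (max (d p.1 p.2.1) (max (d p.2.1 p.2.2) (d p.2.2 p.1)))
    · simp [hp]
  have hgsum : (fun s => ((badCard d s : ℕ) : ℝ)) = fun s => ∑ p : X × X × X, G p s :=
    funext hbadEq
  have hgInt : IntegrableOn (fun s => ((badCard d s : ℕ) : ℝ)) (Set.Ioi (0:ℝ)) := by
    rw [hgsum]
    exact integrable_finset_sum _ (fun p _ => hGint p)
  have hGval : ∀ p : X × X × X, ∫ s in Set.Ioi (0:ℝ), G p s =
      if p.1 ≠ p.2.1 ∧ p.2.1 ≠ p.2.2 ∧ p.1 ≠ p.2.2 then tp d p.1 p.2.1 p.2.2 else 0 := by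
    intro p
    obtain ⟨x, y, z⟩ := p
    by_cases hp : x ≠ y ∧ y ≠ z ∧ x ≠ z
    · simp only [hG, hp.1, hp.2.1, hp.2.2, ne_eq, not_false_eq_true, and_self, if_true]
      have h0 : 0 ≤ max (min (d x y) (d y z)) (max (min (d x y) (d z x)) (min (d y z) (d z x))) :=
        le_trans (le_min (hnn x y) (hnn y z)) (le_max_left _ _)
      have hle : max (min (d x y) (d y z)) (max (min (d x y) (d z x)) (min (d y z) (d z x))) ≤
          max (d x y) (max (d y z) (d z x)) := by
        refine max_le (le_trans (min_le_left _ _) (le_max_left _ _)) (max_le ?_ ?_)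
        · exact le_trans (min_le_left _ _) (le_max_left _ _)
        · exact le_trans (min_le_left _ _) (le_max_of_le_right (le_max_left _ _))
      rw [intIco _ _ h0 hle]
      rw [tp]
      simp only [tpt]
      rw [hsym y x, hsym z y, hsym z x]
      exact (tpval (d x y) (d y z) (d x z)).symm
    · simp [hG, hp]
  have hpart3 : (∫ s in Set.Ioi (0 : ℝ), (badCard d s : ℝ)) =
      ∑ x : X, ∑ y : X, ∑ z : X, if x ≠ y ∧ y ≠ z ∧ x ≠ z then tp d x y z else 0 := by
    rw [show (∫ s in Set.Ioi (0 : ℝ), (badCard d s : ℝ)) =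
        ∫ s in Set.Ioi (0 : ℝ), ∑ p : X × X × X, G p s from by rw [← hgsum]]
    rw [integral_finset_sum _ (fun p _ => hGint p)]
    simp only [Fintype.sum_prod_type]
    refine Finset.sum_congr rfl fun x _ => Finset.sum_congr rfl fun y _ =>
      Finset.sum_congr rfl fun z _ => ?_
    exact hGval (x, y, z)
  -- part 2
  have hEB : ∀ s : ℝ, badCardE e ((tIdx d e s : ℕ)) = badCard d s := by
    intro s
    rw [badCardE, badCard]
    congr 1
    apply Finset.filter_congr
    intro p _
    constructor
    · rintro ⟨h1, h2, h3, h4⟩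
      refine ⟨h1, h2, h3, ?_⟩
      rw [if_congr (hinE s p.1 p.2.1 h1) rfl rfl, if_congr (hinE s p.2.1 p.2.2 h2) rfl rfl,
        if_congr (hinE s p.2.2 p.1 (Ne.symm h3)) rfl rfl] at h4
      exact h4
    · rintro ⟨h1, h2, h3, h4⟩
      refine ⟨h1, h2, h3, ?_⟩
      rw [if_congr (hinE s p.1 p.2.1 h1) rfl rfl, if_congr (hinE s p.2.1 p.2.2 h2) rfl rfl,
        if_congr (hinE s p.2.2 p.1 (Ne.symm h3)) rfl rfl]
      exact h4
  have hpt : ∀ s : ℝ, (3:ℝ) * ((disCard e (P (tIdx d e s)) ((tIdx d e s : ℕ))) : ℝ) ≤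
      4 * ((badCard d s : ℕ) : ℝ) := by
    intro s
    have := hdis (tIdx d e s)
    rw [hEB s] at this
    exact_mod_cast this
  have hpart2 : (3 * ∫ s in Set.Ioi (0 : ℝ), (disCard e (P (tIdx d e s)) ((tIdx d e s : ℕ)) : ℝ)) ≤
      4 * ∫ s in Set.Ioi (0 : ℝ), (badCard d s : ℝ) := by
    rw [← integral_const_mul, ← integral_const_mul]
    exact integral_mono (hfInt.const_mul 3) (hgInt.const_mul 4) hpt
  exact ⟨hpart1, hpart2, hpart3⟩
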